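/- Let v_1, ..., v_n be unit vectors in R^d in isotropic position, let B be the n×d matrix with rows v_1,...,v_n, and let T ⊆ [n] satisfy |T| < n/(8d²). Let B_T̄ denote the submatrix of B consisting of rows indexed by the complement of T. Then the stable rank of B_T̄, defined as ‖B_T̄‖_F² / ‖B_T̄‖², is strictly greater than d − 1/4. -/

import Mathlib

open scoped RealInnerProductSpace
open scoped Classical

noncomputable def eNorm {ι : Type*} [Fintype ι] (x : ι → ℝ) : ℝ :=
  Real.sqrt (∑ i, (x i) ^ 2)

/-- The operator (spectral) norm of a real matrix: the supremum of `‖M x‖` over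
unit vectors `x` (Euclidean norms). -/
noncomputable def opNorm {ι κ : Type*} [Fintype ι] [Fintype κ] (M : Matrix ι κ ℝ) : ℝ :=
  sSup {c : ℝ | ∃ x : κ → ℝ, eNorm x = 1 ∧ c = eNorm (M.mulVec x)}

/-- The squared Frobenius norm of a real matrix. -/
noncomputable def frobSq {ι κ : Type*} [Fintype ι] [Fintype κ] (M : Matrix ι κ ℝ) : ℝ :=
  ∑ i, ∑ j, (M i j) ^ 2

theorem stmt3 (d n : ℕ) (hd : 0 < d) (hn : 0 < n)
    (v : Fin n → EuclideanSpace ℝ (Fin d))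
    (hunit : ∀ i, ‖v i‖ = 1)
    (hiso : ∀ u : EuclideanSpace ℝ (Fin d), ‖u‖ = 1 →
      (1 / n : ℝ) * ∑ i, ⟪u, v i⟫ ^ 2 = 1 / d)
    (B : Matrix (Fin n) (Fin d) ℝ) (hB : ∀ i j, B i j = v i j)
    (T : Finset (Fin n)) (hT : (T.card : ℝ) < n / (8 * d ^ 2)) :
    (d : ℝ) - 1 / 4 <
      frobSq (Matrix.of fun (i : {i : Fin n // i ∉ T}) (j : Fin d) => B i.1 j) /
        (opNorm (Matrix.of fun (i : {i : Fin n // i ∉ T}) (j : Fin d) => B i.1 j)) ^ 2 := by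
  set C : Matrix {i : Fin n // i ∉ T} (Fin d) ℝ :=
    Matrix.of fun (i : {i : Fin n // i ∉ T}) (j : Fin d) => B i.1 j with hCdef
  have hC : ∀ (i : {i : Fin n // i ∉ T}) (j : Fin d), C i j = v i.1 j := by
    intro i j; simp [hCdef, hB]
  -- each row has unit square sum
  have hrow : ∀ i : Fin n, ∑ j, (v i j) ^ 2 = 1 := by
    intro i
    have h := hunit i
    rw [EuclideanSpace.norm_eq] at h
    have h' : Real.sqrt (∑ j, (v i j) ^ 2) = 1 := by
      simpa [Real.norm_eq_abs, sq_abs] using h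
    exact Real.sqrt_eq_one.mp h'
  have hd1 : (1 : ℝ) ≤ d := by exact_mod_cast hd
  have hn0 : (0 : ℝ) < n := by exact_mod_cast hn
  -- isotropic sum identity
  have hsum : ∀ x : Fin d → ℝ, (∑ j, (x j) ^ 2 = 1) →
      ∑ i, (∑ j, v i j * x j) ^ 2 = (n : ℝ) / d := by
    intro x hx
    have hxnorm : ‖(WithLp.toLp 2 x : EuclideanSpace ℝ (Fin d))‖ = 1 := by
      rw [EuclideanSpace.norm_eq]
      simpa [Real.norm_eq_abs, sq_abs, hx] using Real.sqrt_one
    have h := hiso (WithLp.toLp 2 x : EuclideanSpace ℝ (Fin d)) hxnorm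
    have hinner : ∀ i, ⟪(WithLp.toLp 2 x : EuclideanSpace ℝ (Fin d)), v i⟫ = ∑ j, v i j * x j := by
      intro i
      simp [PiLp.inner_apply, RCLike.inner_apply, mul_comm]
    rw [Finset.sum_congr rfl fun i _ => by rw [hinner i]] at h
    rw [eq_div_iff (by positivity : (d:ℝ) ≠ 0)]
    field_simp at h
    linarith
  -- mulVec formula
  have hmul : ∀ (x : Fin d → ℝ) (i : {i : Fin n // i ∉ T}),
      C.mulVec x i = ∑ j, v i.1 j * x j := by
    intro x i
    simp [Matrix.mulVec, dotProduct, hC]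
  -- subtype sums vs full sums
  have hsub_le : ∀ x : Fin d → ℝ,
      ∑ i : {i : Fin n // i ∉ T}, (∑ j, v i.1 j * x j) ^ 2 ≤
        ∑ i, (∑ j, v i j * x j) ^ 2 := by
    intro x
    have heq : ∑ i ∈ Tᶜ, (∑ j, v i j * x j) ^ 2 =
        ∑ i : {i : Fin n // i ∉ T}, (∑ j, v i.1 j * x j) ^ 2 :=
      Finset.sum_subtype Tᶜ (fun i => Finset.mem_compl) (fun i => (∑ j, v i j * x j) ^ 2)
    rw [← heq]
    exact Finset.sum_le_sum_of_subset_of_nonneg (Finset.subset_univ _)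
      (fun i _ _ => sq_nonneg _)
  -- the set for opNorm
  set S : Set ℝ := {c : ℝ | ∃ x : Fin d → ℝ, eNorm x = 1 ∧ c = eNorm (C.mulVec x)} with hS
  have hbound : ∀ c ∈ S, c ≤ Real.sqrt ((n : ℝ) / d) := by
    rintro c ⟨x, hx, rfl⟩
    have hx1 : ∑ j, (x j) ^ 2 = 1 := Real.sqrt_eq_one.mp hx
    have h1 : ∑ i : {i : Fin n // i ∉ T}, (C.mulVec x i) ^ 2 ≤ (n : ℝ) / d := by
      calc ∑ i : {i : Fin n // i ∉ T}, (C.mulVec x i) ^ 2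
          = ∑ i : {i : Fin n // i ∉ T}, (∑ j, v i.1 j * x j) ^ 2 := by
            exact Finset.sum_congr rfl fun i _ => by rw [hmul]
        _ ≤ ∑ i, (∑ j, v i j * x j) ^ 2 := hsub_le x
        _ = (n : ℝ) / d := hsum x hx1
    exact Real.sqrt_le_sqrt h1
  have hbdd : BddAbove S := ⟨Real.sqrt ((n : ℝ) / d), hbound⟩
  -- T.card < n, pick i0 ∉ T
  have hcardlt : T.card < n := by
    have h8 : (n : ℝ) / (8 * d ^ 2) ≤ n := by
      apply div_le_self (le_of_lt hn0)
      nlinarith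
    exact_mod_cast lt_of_lt_of_le hT h8
  have hcompl : (Tᶜ : Finset (Fin n)).Nonempty := by
    rw [← Finset.card_pos, Finset.card_compl]
    simpa using Nat.sub_pos_of_lt (by simpa using hcardlt)
  obtain ⟨i0, hi0⟩ := hcompl
  rw [Finset.mem_compl] at hi0
  -- the witness element
  set x0 : Fin d → ℝ := fun j => v i0 j with hx0def
  have hx0 : eNorm x0 = 1 := by
    rw [eNorm]
    simpa [hx0def, hrow i0] using Real.sqrt_one
  have hc0mem : eNorm (C.mulVec x0) ∈ S := ⟨x0, hx0, rfl⟩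
  have hc0ge : (1 : ℝ) ≤ eNorm (C.mulVec x0) := by
    rw [eNorm]
    have hterm : (C.mulVec x0 ⟨i0, hi0⟩) ^ 2 = 1 := by
      rw [hmul]
      simp only [hx0def]
      rw [show ∑ j, v i0 j * v i0 j = ∑ j, (v i0 j) ^ 2 from
        Finset.sum_congr rfl fun j _ => (sq (v i0 j)).symm, hrow i0]
      norm_num
    have h1 : (1 : ℝ) ≤ ∑ i : {i : Fin n // i ∉ T}, (C.mulVec x0 i) ^ 2 := by
      rw [← hterm]
      exact Finset.single_le_sum (f := fun i => (C.mulVec x0 i) ^ 2)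
        (fun i _ => sq_nonneg _) (Finset.mem_univ (⟨i0, hi0⟩ : {i : Fin n // i ∉ T}))
    calc (1 : ℝ) = Real.sqrt 1 := Real.sqrt_one.symm
      _ ≤ _ := Real.sqrt_le_sqrt h1
  -- opNorm bounds
  have hop_ge : (1 : ℝ) ≤ opNorm C := by
    rw [opNorm]
    exact le_trans hc0ge (le_csSup hbdd hc0mem)
  have hop_le : opNorm C ≤ Real.sqrt ((n : ℝ) / d) := by
    rw [opNorm]
    exact csSup_le ⟨_, hc0mem⟩ hbound
  have hnd0 : (0 : ℝ) ≤ (n : ℝ) / d := by positivity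
  have hop_sq_le : (opNorm C) ^ 2 ≤ (n : ℝ) / d := by
    have := pow_le_pow_left₀ (le_trans zero_le_one hop_ge) hop_le 2
    rwa [Real.sq_sqrt hnd0] at this
  have hop_sq_pos : (0 : ℝ) < (opNorm C) ^ 2 := by nlinarith
  -- Frobenius norm
  have hfrob : frobSq C = (n : ℝ) - T.card := by
    rw [frobSq]
    have : ∀ i : {i : Fin n // i ∉ T}, ∑ j, (C i j) ^ 2 = 1 := by
      intro i
      rw [Finset.sum_congr rfl fun j _ => by rw [hC]]
      exact hrow i.1
    rw [Finset.sum_congr rfl fun i _ => this i, Finset.sum_const, nsmul_eq_mul, mul_one]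
    have hcard : Fintype.card {i : Fin n // i ∉ T} = n - T.card := by
      simp [Fintype.card_subtype_compl]
    rw [Finset.card_univ, hcard]
    rw [Nat.cast_sub (le_of_lt hcardlt)]
  -- final arithmetic
  have ht0 : (0 : ℝ) ≤ T.card := Nat.cast_nonneg _
  have hF0 : (0 : ℝ) ≤ (n : ℝ) - T.card := by
    have : (T.card : ℝ) ≤ n := by exact_mod_cast le_of_lt hcardlt
    linarith
  have hkey : ((n : ℝ) - T.card) / ((n : ℝ) / d) ≤ ((n : ℝ) - T.card) / (opNorm C) ^ 2 :=
    div_le_div_of_nonneg_left hF0 hop_sq_pos hop_sq_le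
  have h8 : (T.card : ℝ) * (8 * d ^ 2) < n :=
    (lt_div_iff₀ (by positivity)).mp hT
  have hfin : (d : ℝ) - 1 / 4 < ((n : ℝ) - T.card) / ((n : ℝ) / d) := by
    rw [div_div_eq_mul_div, lt_div_iff₀ hn0]
    nlinarith [mul_nonneg (mul_nonneg ht0 (by linarith : (0:ℝ) ≤ d)) (by linarith : (0:ℝ) ≤ 2 * d - 1)]
  rw [hfrob]
  exact lt_of_lt_of_le hfin hkey
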